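/- arXiv:1011.5066 — 2 statements merged into one kernel-verified Lean document; each statement's English description precedes it below -/
import Mathlib

section
/- Let $\mu$ be a probability measure on a measure space, let $M \geq 1$ be a constant, and let $f$ be a measurable function with $0 < f \leq M$ and $\ln f \in L^2(\mu)$. Set $g = \ln f - \int \ln f \, d\mu$. Then $\left| \ln \int f \, d\mu - \int \ln f \, d\mu \right| \leq \frac{M \|g\|_{L^2(\mu)}}{\int f \, d\mu}$. -/
open MeasureTheory

/-- Nash-type inequality: for a probability measure `μ`, `M ≥ 1`, and a measurable
function `f` with `0 < f ≤ M`, integrable, with `log f ∈ L²(μ)`, setting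
`g = log f - ∫ log f dμ`, one has
`|log ∫ f dμ - ∫ log f dμ| ≤ M ‖g‖_{L²(μ)} / ∫ f dμ`. -/
theorem stmt_0 {α : Type*} [MeasurableSpace α] (μ : Measure α) [IsProbabilityMeasure μ]
    (M : ℝ) (hM : 1 ≤ M) (f : α → ℝ) (hf_meas : Measurable f)
    (hf_pos : ∀ x, 0 < f x) (hf_le : ∀ x, f x ≤ M)
    (hf_int : Integrable f μ) (hf_int_pos : 0 < ∫ x, f x ∂μ)
    (hlog : MemLp (fun x => Real.log (f x)) 2 μ)
    (g : α → ℝ) (hg : g = fun x => Real.log (f x) - ∫ y, Real.log (f y) ∂μ) :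
    |Real.log (∫ x, f x ∂μ) - ∫ x, Real.log (f x) ∂μ| ≤
      M * (eLpNorm g 2 μ).toReal / ∫ x, f x ∂μ := by
  set A := ∫ x, f x ∂μ with hA
  set m := ∫ x, Real.log (f x) ∂μ with hm
  have hA0 : 0 < A := hf_int_pos
  have hM0 : (0:ℝ) < M := lt_of_lt_of_le one_pos hM
  have hAM : A ≤ M := by
    calc A ≤ ∫ _x, M ∂μ := integral_mono hf_int (integrable_const M) hf_le
    _ = M := by simp
  have hlogint : Integrable (fun x => Real.log (f x)) μ := hlog.integrable one_le_two
  have hg2 : MemLp g 2 μ := by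
    rw [hg]; exact hlog.sub (memLp_const m)
  have hgint : Integrable g μ := hg2.integrable one_le_two
  have hgzero : ∫ x, g x ∂μ = 0 := by
    rw [hg]
    rw [integral_sub hlogint (integrable_const m)]
    simp [hm]
  -- Step 1: Jensen: m ≤ log A
  have h1 : m ≤ Real.log A := by
    have hpt : ∀ x, Real.log (f x) ≤ Real.log A + (f x / A - 1) := by
      intro x
      have h := Real.log_le_sub_one_of_pos (div_pos (hf_pos x) hA0)
      rw [Real.log_div (hf_pos x).ne' hA0.ne'] at h
      linarith
    have hsub1 : Integrable (fun x => f x / A - 1) μ :=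
      (hf_int.div_const A).sub (integrable_const 1)
    have hintR : Integrable (fun x => Real.log A + (f x / A - 1)) μ :=
      (integrable_const (Real.log A)).add hsub1
    calc m ≤ ∫ x, (Real.log A + (f x / A - 1)) ∂μ := integral_mono hlogint hintR hpt
    _ = Real.log A := by
      rw [integral_add (integrable_const _) hsub1,
        integral_sub (hf_int.div_const A) (integrable_const 1), integral_div, ← hA]
      simp [div_self hA0.ne']
  -- integrability of f * log f and f * g
  have hflog : Integrable (fun x => f x * Real.log (f x)) μ :=
    hlogint.bdd_mul hf_meas.aestronglyMeasurable (c := M)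
      (ae_of_all _ fun x => by rw [Real.norm_eq_abs, abs_of_pos (hf_pos x)]; exact hf_le x)
  have hfg : Integrable (fun x => f x * g x) μ :=
    hgint.bdd_mul hf_meas.aestronglyMeasurable (c := M)
      (ae_of_all _ fun x => by rw [Real.norm_eq_abs, abs_of_pos (hf_pos x)]; exact hf_le x)
  -- Step 2: A log A ≤ ∫ f log f
  have h2 : A * Real.log A ≤ ∫ x, f x * Real.log (f x) ∂μ := by
    have hpt : ∀ x, f x * Real.log A ≤ f x * Real.log (f x) + (A - f x) := by
      intro x
      have h := Real.log_le_sub_one_of_pos (div_pos hA0 (hf_pos x))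
      rw [Real.log_div hA0.ne' (hf_pos x).ne'] at h
      have h' := mul_le_mul_of_nonneg_left h (hf_pos x).le
      have heq : f x * (A / f x) = A := by
        field_simp
        exact div_self (hf_pos x).ne'
      nlinarith [hf_pos x]
    have hint1 : Integrable (fun x => f x * Real.log A) μ := hf_int.mul_const _
    have hsub2 : Integrable (fun x => A - f x) μ := (integrable_const A).sub hf_int
    have hint2 : Integrable (fun x => f x * Real.log (f x) + (A - f x)) μ :=
      hflog.add hsub2
    have hmono := integral_mono hint1 hint2 hpt
    rw [integral_mul_const, integral_add hflog hsub2,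
      integral_sub (integrable_const A) hf_int, ← hA] at hmono
    simp only [integral_const, measure_univ, probReal_univ, ENNReal.toReal_one, one_smul,
      sub_self, add_zero] at hmono
    linarith
  -- so A * (log A - m) ≤ ∫ f * g
  have h3 : A * (Real.log A - m) ≤ ∫ x, f x * g x ∂μ := by
    have heq : ∫ x, f x * g x ∂μ = (∫ x, f x * Real.log (f x) ∂μ) - A * m := by
      rw [hg]
      have hrw : (fun x => f x * (Real.log (f x) - m)) =
          fun x => f x * Real.log (f x) - f x * m := by
        funext x; ring
      rw [hrw, integral_sub hflog (hf_int.mul_const m), integral_mul_const, ← hA]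
    rw [heq]; nlinarith
  -- Step 3: ∫ f g = ∫ (f - A) g ≤ M ∫ |g| ≤ M ‖g‖₂
  have hfAg : Integrable (fun x => (f x - A) * g x) μ := by
    have hrw : (fun x => (f x - A) * g x) = fun x => f x * g x - A * g x := by
      funext x; ring
    rw [hrw]; exact hfg.sub (hgint.const_mul A)
  have h4 : ∫ x, f x * g x ∂μ ≤ M * ∫ x, |g x| ∂μ := by
    have heq : ∫ x, f x * g x ∂μ = ∫ x, (f x - A) * g x ∂μ := by
      have hrw : (fun x => (f x - A) * g x) = fun x => f x * g x - A * g x := by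
        funext x; ring
      rw [hrw, integral_sub hfg (hgint.const_mul A), integral_const_mul, hgzero, mul_zero,
        sub_zero]
    rw [heq, ← integral_const_mul]
    apply integral_mono hfAg ((hgint.abs).const_mul M)
    intro x
    calc (f x - A) * g x ≤ |(f x - A) * g x| := le_abs_self _
    _ = |f x - A| * |g x| := abs_mul _ _
    _ ≤ M * |g x| := by
      apply mul_le_mul_of_nonneg_right _ (abs_nonneg _)
      rw [abs_sub_le_iff]
      constructor <;> nlinarith [hf_pos x, hf_le x]
  have h5 : ∫ x, |g x| ∂μ ≤ (eLpNorm g 2 μ).toReal := by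
    have h1' : ∫ x, |g x| ∂μ = (eLpNorm g 1 μ).toReal := by
      rw [eLpNorm_one_eq_lintegral_enorm]
      simp_rw [← Real.norm_eq_abs]
      exact integral_norm_eq_lintegral_enorm hg2.aestronglyMeasurable
    rw [h1']
    exact ENNReal.toReal_mono hg2.eLpNorm_ne_top
      (eLpNorm_le_eLpNorm_of_exponent_le one_le_two hg2.aestronglyMeasurable)
  -- conclude
  rw [abs_of_nonneg (by linarith), le_div_iff₀ hA0]
  nlinarith [h3, h4, h5, hM0.le]
end

section
/- Let $u : \mathbb{R}^3 \times (-\infty, 0] \to \mathbb{R}^3$ be a vector field of the form $u(x,t) = (l_1(t), l_2(t), l_3(t))$ depending only on time, and suppose $u = \nabla \times B$ for a vector field $B(\cdot, t)$ with $\sup_t \|B(\cdot,t)\|_{BMO} < \infty$, where each component of $B(\cdot, t)$ is harmonic in $x$ (which holds since $\Delta B = -\nabla \times u = 0$ when $\mathrm{div}\, B = 0$). Then $u \equiv 0$. -/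
set_option maxHeartbeats 1000000


open MeasureTheory Metric

/-- Partial derivative along the `i`-th coordinate direction. -/
noncomputable def pd (i : Fin 3) (f : EuclideanSpace ℝ (Fin 3) → ℝ)
    (x : EuclideanSpace ℝ (Fin 3)) : ℝ :=
  fderiv ℝ f x (EuclideanSpace.single i 1)

/-- The curl of a vector field on `ℝ³`. -/
noncomputable def curl (F : EuclideanSpace ℝ (Fin 3) → EuclideanSpace ℝ (Fin 3))
    (x : EuclideanSpace ℝ (Fin 3)) : EuclideanSpace ℝ (Fin 3) :=
  (WithLp.equiv 2 (Fin 3 → ℝ)).symm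
    ![pd 1 (fun y => F y 2) x - pd 2 (fun y => F y 1) x,
      pd 2 (fun y => F y 0) x - pd 0 (fun y => F y 2) x,
      pd 0 (fun y => F y 1) x - pd 1 (fun y => F y 0) x]

/-- The divergence of a vector field on `ℝ³`. -/
noncomputable def div3 (F : EuclideanSpace ℝ (Fin 3) → EuclideanSpace ℝ (Fin 3))
    (x : EuclideanSpace ℝ (Fin 3)) : ℝ :=
  ∑ i : Fin 3, pd i (fun y => F y i) x

/-- The Laplacian of a scalar function on `ℝ³`. -/
noncomputable def laplacian (f : EuclideanSpace ℝ (Fin 3) → ℝ)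
    (x : EuclideanSpace ℝ (Fin 3)) : ℝ :=
  ∑ i : Fin 3, iteratedFDeriv ℝ 2 f x ![EuclideanSpace.single i 1, EuclideanSpace.single i 1]

local notation "E3" => EuclideanSpace ℝ (Fin 3)

lemma cont_integrableOn_ball (h : E3 → ℝ) (hh : Continuous h) (x0 : E3) (R : ℝ) :
    IntegrableOn h (ball x0 R) volume := by
  refine IntegrableOn.mono_set ?_ (ball_subset_closedBall (x := x0) (ε := R))
  exact hh.continuousOn.integrableOn_compact (isCompact_closedBall x0 R)

lemma shift_integral (h : E3 → ℝ) (a x0 : E3) (R : ℝ) :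
    ∫ x in ball x0 R, h (x + a) = ∫ y in ball (x0 + a) R, h y := by
  have hmap : Measure.map (· + a) (volume : Measure E3) = volume :=
    map_add_right_eq_self volume a
  calc ∫ x in ball x0 R, h (x + a)
      = ∫ x in (MeasurableEquiv.addRight a) ⁻¹' (ball (x0 + a) R), h ((MeasurableEquiv.addRight a) x) := by
        congr 1
        ext x
        simp [MeasurableEquiv.addRight, dist_eq_norm]
    _ = ∫ y in ball (x0 + a) R, h y ∂(Measure.map (MeasurableEquiv.addRight a) volume) :=
        (setIntegral_map_equiv _ _ _).symm
    _ = ∫ y in ball (x0 + a) R, h y := by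
        rw [show ((MeasurableEquiv.addRight a) : E3 → E3) = (· + a) from rfl, hmap]

lemma vol_ratio (x0 : E3) (S : ℝ) (hS : 0 < S) :
    (volume (ball x0 (3 * S))).toReal = 27 * (volume (ball x0 S)).toReal := by
  rw [Measure.addHaar_ball volume x0 (by positivity : (0:ℝ) ≤ 3 * S),
    Measure.addHaar_ball volume x0 hS.le]
  rw [ENNReal.toReal_mul, ENNReal.toReal_mul, ENNReal.toReal_ofReal (by positivity),
    ENNReal.toReal_ofReal (by positivity)]
  have h3 : Module.finrank ℝ E3 = 3 := finrank_euclideanSpace_fin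
  rw [h3]; ring

lemma vol_pos (x0 : E3) (S : ℝ) (hS : 0 < S) : 0 < (volume (ball x0 S)).toReal :=
  ENNReal.toReal_pos (measure_ball_pos volume x0 hS).ne' measure_ball_lt_top.ne

lemma shift_one_bound (f : E3 → ℝ) (hf : Continuous f) (N : ℝ)
    (hN : ∀ (x0 : E3) (R : ℝ), 0 < R →
      ∫ x in ball x0 R, |f x - ⨍ y in ball x0 R, f y| ≤ N * (volume (ball x0 R)).toReal)
    (x0 : E3) (S : ℝ) (hS : 0 < S) (a : E3) (ha : ‖a‖ ≤ 2 * S) :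
    |∫ x in ball x0 S, (f (x + a) - ⨍ y in ball x0 (3*S), f y)|
      ≤ 27 * N * (volume (ball x0 S)).toReal := by
  set m := ⨍ y in ball x0 (3*S), f y with hm
  have hsub : ball (x0 + a) S ⊆ ball x0 (3 * S) := by
    intro z hz
    have : dist z x0 ≤ dist z (x0 + a) + dist (x0 + a) x0 := dist_triangle _ _ _
    have h2 : dist (x0 + a) x0 = ‖a‖ := by simp [dist_eq_norm]
    rw [mem_ball] at hz ⊢
    nlinarith [hz]
  have hint : IntegrableOn (fun y => |f y - m|) (ball x0 (3*S)) volume :=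
    cont_integrableOn_ball _ ((hf.sub continuous_const).abs) x0 (3*S)
  calc |∫ x in ball x0 S, (f (x + a) - m)|
      = |∫ y in ball (x0 + a) S, (f y - m)| := by rw [shift_integral (fun y => f y - m) a x0 S]
    _ ≤ ∫ y in ball (x0 + a) S, |f y - m| := by
        simpa using norm_integral_le_integral_norm (μ := volume.restrict (ball (x0+a) S)) (fun y => f y - m)
    _ ≤ ∫ y in ball x0 (3*S), |f y - m| := by
        refine setIntegral_mono_set hint ?_ (HasSubset.Subset.eventuallyLE hsub)
        filter_upwards with y using abs_nonneg _
    _ ≤ N * (volume (ball x0 (3*S))).toReal := hN x0 (3*S) (by positivity)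
    _ = 27 * N * (volume (ball x0 S)).toReal := by rw [vol_ratio x0 S hS]; ring

lemma inner_bound (f : E3 → ℝ) (hf : Continuous f) (N : ℝ)
    (hN : ∀ (x0 : E3) (R : ℝ), 0 < R →
      ∫ x in ball x0 R, |f x - ⨍ y in ball x0 R, f y| ≤ N * (volume (ball x0 R)).toReal)
    (S : ℝ) (hS : 0 < S) (a b : E3) (ha : ‖a‖ ≤ 2 * S) (hb : ‖b‖ ≤ 2 * S) :
    |∫ x in ball (0:E3) S, (f (x + a) - f (x + b))|
      ≤ 54 * N * (volume (ball (0:E3) S)).toReal := by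
  set m := ⨍ y in ball (0:E3) (3*S), f y with hm
  have h1 := shift_one_bound f hf N hN 0 S hS a ha
  have h2 := shift_one_bound f hf N hN 0 S hS b hb
  have hint1 : IntegrableOn (fun x => f (x + a) - m) (ball (0:E3) S) volume :=
    cont_integrableOn_ball _ ((hf.comp (continuous_id.add continuous_const)).sub
      continuous_const) 0 S
  have hint2 : IntegrableOn (fun x => f (x + b) - m) (ball (0:E3) S) volume :=
    cont_integrableOn_ball _ ((hf.comp (continuous_id.add continuous_const)).sub
      continuous_const) 0 S
  have e : ∫ x in ball (0:E3) S, (f (x + a) - f (x + b))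
      = (∫ x in ball (0:E3) S, (f (x + a) - m)) - ∫ x in ball (0:E3) S, (f (x + b) - m) := by
    rw [← integral_sub hint1 hint2]
    congr 1
    funext x
    ring
  rw [e]
  calc |(∫ x in ball (0:E3) S, (f (x + a) - m)) - ∫ x in ball (0:E3) S, (f (x + b) - m)|
      ≤ |∫ x in ball (0:E3) S, (f (x + a) - m)| + |∫ x in ball (0:E3) S, (f (x + b) - m)| :=
        abs_sub _ _
    _ ≤ 54 * N * (volume (ball (0:E3) S)).toReal := by linarith

lemma swap_ball_interval (F : E3 → ℝ → ℝ) (hF : Continuous fun p : E3 × ℝ => F p.1 p.2)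
    (x0 : E3) (R S : ℝ) (hS : 0 ≤ S) :
    ∫ x in ball x0 R, (∫ u in (0:ℝ)..S, F x u) = ∫ u in (0:ℝ)..S, ∫ x in ball x0 R, F x u := by
  have hint : Integrable (Function.uncurry F)
      ((volume.restrict (ball x0 R)).prod (volume.restrict (Set.Ioc 0 S))) := by
    rw [Measure.prod_restrict, ← Measure.volume_eq_prod]
    refine IntegrableOn.mono_set ?_
      (Set.prod_mono (ball_subset_closedBall (x := x0) (ε := R)) Set.Ioc_subset_Icc_self)
    exact hF.continuousOn.integrableOn_compact ((isCompact_closedBall x0 R).prod isCompact_Icc)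
  have := integral_integral_swap hint
  simp_rw [intervalIntegral.integral_of_le hS]
  exact this

lemma swap_interval_interval (G : ℝ → ℝ → ℝ) (hG : Continuous fun p : ℝ × ℝ => G p.1 p.2)
    (S : ℝ) (hS : 0 ≤ S) :
    ∫ s in (0:ℝ)..S, (∫ u in (0:ℝ)..S, G s u) = ∫ u in (0:ℝ)..S, ∫ s in (0:ℝ)..S, G s u := by
  have hint : Integrable (Function.uncurry G)
      ((volume.restrict (Set.Ioc 0 S)).prod (volume.restrict (Set.Ioc 0 S))) := by
    rw [Measure.prod_restrict, ← Measure.volume_eq_prod]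
    refine IntegrableOn.mono_set ?_ (Set.prod_mono Set.Ioc_subset_Icc_self Set.Ioc_subset_Icc_self)
    exact hG.continuousOn.integrableOn_compact (isCompact_Icc.prod isCompact_Icc)
  have := integral_integral_swap hint
  simp_rw [intervalIntegral.integral_of_le hS]
  exact this

lemma ftc_line (f : E3 → ℝ) (hf : ContDiff ℝ 2 f) (a v : E3) (S : ℝ) :
    ∫ s in (0:ℝ)..S, (fderiv ℝ f (a + s • v)) v = f (a + S • v) - f a := by
  have hcont : Continuous fun s : ℝ => (fderiv ℝ f (a + s • v)) v := by
    refine Continuous.clm_apply ?_ continuous_const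
    exact (hf.continuous_fderiv two_ne_zero).comp
      (continuous_const.add (continuous_id.smul continuous_const))
  have hderiv : ∀ s ∈ Set.uIcc (0:ℝ) S,
      HasDerivAt (fun s : ℝ => f (a + s • v)) ((fderiv ℝ f (a + s • v)) v) s := by
    intro s _
    have h1 : HasDerivAt (fun s : ℝ => a + s • v) v s := by
      simpa using ((hasDerivAt_id s).smul_const v).const_add a
    have h2 : HasFDerivAt f (fderiv ℝ f (a + s • v)) (a + s • v) :=
      (hf.differentiable two_ne_zero (a + s • v)).hasFDerivAt
    exact h2.comp_hasDerivAt s h1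
  have := intervalIntegral.integral_eq_sub_of_hasDerivAt hderiv
    (hcont.intervalIntegrable 0 S)
  simpa using this

lemma key (f g : E3 → ℝ) (i j : Fin 3) (c N : ℝ)
    (hf : ContDiff ℝ 2 f) (hg : ContDiff ℝ 2 g)
    (hc : ∀ x, pd i f x - pd j g x = c)
    (hNf : ∀ (x0 : E3) (R : ℝ), 0 < R →
      ∫ x in ball x0 R, |f x - ⨍ y in ball x0 R, f y| ≤ N * (volume (ball x0 R)).toReal)
    (hNg : ∀ (x0 : E3) (R : ℝ), 0 < R →
      ∫ x in ball x0 R, |g x - ⨍ y in ball x0 R, g y| ≤ N * (volume (ball x0 R)).toReal) :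
    c = 0 := by
  set ei := EuclideanSpace.single i (1:ℝ) with hei
  set ej := EuclideanSpace.single j (1:ℝ) with hej
  have hnei : ‖ei‖ = 1 := by rw [hei, EuclideanSpace.norm_single]; norm_num
  have hnej : ‖ej‖ = 1 := by rw [hej, EuclideanSpace.norm_single]; norm_num
  have hfc : Continuous f := hf.continuous
  have hgc : Continuous g := hg.continuous
  have hgj : Continuous fun y : E3 => pd j g y := by
    refine Continuous.clm_apply ?_ continuous_const
    exact hg.continuous_fderiv two_ne_zero
  -- the main quantitative bound
  have main : ∀ S : ℝ, 0 < S →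
      |c| * S * S * (volume (ball (0:E3) S)).toReal
        ≤ 108 * N * S * (volume (ball (0:E3) S)).toReal := by
    intro S hS
    set V := (volume (ball (0:E3) S)).toReal with hV
    set D := ball (0:E3) S with hD
    -- step 1: FTC in the i-direction plus the constancy of the curl component
    have step1 : ∀ (x : E3) (u : ℝ),
        f (x + S • ei + u • ej) - f (x + u • ej)
          = c * S + ∫ s in (0:ℝ)..S, pd j g (x + s • ei + u • ej) := by
      intro x u
      have h1 := ftc_line f hf (x + u • ej) ei S
      have hpt : ∀ s : ℝ, x + u • ej + s • ei = x + s • ei + u • ej := fun s => by abel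
      have h2 : ∫ s in (0:ℝ)..S, (fderiv ℝ f (x + u • ej + s • ei)) ei
          = ∫ s in (0:ℝ)..S, (c + pd j g (x + s • ei + u • ej)) := by
        refine intervalIntegral.integral_congr fun s _ => ?_
        have := hc (x + s • ei + u • ej)
        rw [hpt s]
        show pd i f (x + s • ei + u • ej) = _
        linarith
      have h3 : ∫ s in (0:ℝ)..S, (c + pd j g (x + s • ei + u • ej))
          = c * S + ∫ s in (0:ℝ)..S, pd j g (x + s • ei + u • ej) := by
        have hcont2 : Continuous fun s : ℝ => pd j g (x + s • ei + u • ej) :=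
          hgj.comp ((continuous_const.add (continuous_id.smul continuous_const)).add
            continuous_const)
        rw [intervalIntegral.integral_add intervalIntegrable_const
          (hcont2.intervalIntegrable 0 S)]
        simp [mul_comm]
      rw [hpt S] at h1
      rw [h1] at h2
      linarith [h2, h3]
    -- step 2: FTC in the j-direction for g
    have step1g : ∀ (x : E3) (s : ℝ),
        ∫ u in (0:ℝ)..S, pd j g (x + s • ei + u • ej)
          = g (x + s • ei + S • ej) - g (x + s • ei) := by
      intro x s
      have := ftc_line g hg (x + s • ei) ej S
      rw [← this]
      exact intervalIntegral.integral_congr fun u _ => rfl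
    -- step 3: combine, pointwise in x
    have hA : ∀ x : E3,
        (∫ u in (0:ℝ)..S, (f (x + S • ei + u • ej) - f (x + u • ej)))
          = c * S * S + ∫ s in (0:ℝ)..S, (g (x + s • ei + S • ej) - g (x + s • ei)) := by
      intro x
      have e1 : (∫ u in (0:ℝ)..S, (f (x + S • ei + u • ej) - f (x + u • ej)))
          = ∫ u in (0:ℝ)..S, (c * S + ∫ s in (0:ℝ)..S, pd j g (x + s • ei + u • ej)) :=
        intervalIntegral.integral_congr fun u _ => step1 x u
      have hcontall : Continuous fun p : ℝ × ℝ => pd j g (x + p.2 • ei + p.1 • ej) :=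
        hgj.comp ((continuous_const.add (continuous_snd.smul continuous_const)).add
          (continuous_fst.smul continuous_const))
      have hparam : Continuous fun u : ℝ => ∫ s in (0:ℝ)..S, pd j g (x + s • ei + u • ej) := by
        refine intervalIntegral.continuous_parametric_intervalIntegral_of_continuous' ?_ 0 S
        exact hgj.comp ((continuous_const.add (continuous_snd.smul continuous_const)).add
          (continuous_fst.smul continuous_const))
      have e2 : ∫ u in (0:ℝ)..S, (c * S + ∫ s in (0:ℝ)..S, pd j g (x + s • ei + u • ej))
          = c * S * S + ∫ u in (0:ℝ)..S, ∫ s in (0:ℝ)..S, pd j g (x + s • ei + u • ej) := by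
        rw [intervalIntegral.integral_add intervalIntegrable_const
          (hparam.intervalIntegrable 0 S)]
        simp [mul_comm, mul_assoc]
        ring
      have e3 : ∫ u in (0:ℝ)..S, ∫ s in (0:ℝ)..S, pd j g (x + s • ei + u • ej)
          = ∫ s in (0:ℝ)..S, ∫ u in (0:ℝ)..S, pd j g (x + s • ei + u • ej) :=
        swap_interval_interval (fun u s => pd j g (x + s • ei + u • ej)) hcontall S hS.le
      have e4 : ∫ s in (0:ℝ)..S, (∫ u in (0:ℝ)..S, pd j g (x + s • ei + u • ej))
          = ∫ s in (0:ℝ)..S, (g (x + s • ei + S • ej) - g (x + s • ei)) :=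
        intervalIntegral.integral_congr fun s _ => step1g x s
      rw [e1, e2, e3, e4]
    -- continuity facts
    have hFcontf : Continuous fun p : E3 × ℝ =>
        f (p.1 + S • ei + p.2 • ej) - f (p.1 + p.2 • ej) :=
      (hfc.comp ((continuous_fst.add continuous_const).add
        (continuous_snd.smul continuous_const))).sub
        (hfc.comp (continuous_fst.add (continuous_snd.smul continuous_const)))
    have hFcontg : Continuous fun p : E3 × ℝ =>
        g (p.1 + p.2 • ei + S • ej) - g (p.1 + p.2 • ei) :=
      (hgc.comp ((continuous_fst.add (continuous_snd.smul continuous_const)).add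
        continuous_const)).sub
        (hgc.comp (continuous_fst.add (continuous_snd.smul continuous_const)))
    have hBcont : Continuous fun x : E3 =>
        ∫ s in (0:ℝ)..S, (g (x + s • ei + S • ej) - g (x + s • ei)) := by
      refine intervalIntegral.continuous_parametric_intervalIntegral_of_continuous'
        (f := fun (x : E3) (s : ℝ) => g (x + s • ei + S • ej) - g (x + s • ei)) ?_ 0 S
      exact hFcontg
    have hBint : IntegrableOn
        (fun x => ∫ s in (0:ℝ)..S, (g (x + s • ei + S • ej) - g (x + s • ei))) D volume :=
      cont_integrableOn_ball _ hBcont 0 S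
    have hconstint : IntegrableOn (fun _ : E3 => c * S * S) D volume := by
      refine integrableOn_const ?_
      exact measure_ball_lt_top.ne
    have eq1 : ∫ x in D, (∫ u in (0:ℝ)..S, (f (x + S • ei + u • ej) - f (x + u • ej)))
        = c * S * S * V
          + ∫ x in D, (∫ s in (0:ℝ)..S, (g (x + s • ei + S • ej) - g (x + s • ei))) := by
      rw [show (fun x => ∫ u in (0:ℝ)..S, (f (x + S • ei + u • ej) - f (x + u • ej)))
          = fun x => c * S * S
            + ∫ s in (0:ℝ)..S, (g (x + s • ei + S • ej) - g (x + s • ei)) from funext hA]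
      rw [integral_add hconstint hBint, setIntegral_const]
      rw [smul_eq_mul, measureReal_def, ← hV]
      ring_nf
    have eq2 := swap_ball_interval (fun x u => f (x + S • ei + u • ej) - f (x + u • ej))
      hFcontf 0 S S hS.le
    have eq3 := swap_ball_interval (fun x s => g (x + s • ei + S • ej) - g (x + s • ei))
      hFcontg 0 S S hS.le
    have hTA : |∫ u in (0:ℝ)..S, ∫ x in D, (f (x + S • ei + u • ej) - f (x + u • ej))|
        ≤ 54 * N * V * S := by
      have hb : ∀ u ∈ Set.uIoc (0:ℝ) S,
          ‖∫ x in D, (f (x + S • ei + u • ej) - f (x + u • ej))‖ ≤ 54 * N * V := by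
        intro u hu
        rw [Set.uIoc_of_le hS.le] at hu
        have hu0 : 0 < u := hu.1
        have huS : u ≤ S := hu.2
        have ha : ‖S • ei + u • ej‖ ≤ 2 * S := by
          calc ‖S • ei + u • ej‖ ≤ ‖S • ei‖ + ‖u • ej‖ := norm_add_le _ _
            _ = |S| + |u| := by rw [norm_smul, norm_smul, hnei, hnej,
                Real.norm_eq_abs, Real.norm_eq_abs]; ring
            _ ≤ 2 * S := by rw [abs_of_pos hS, abs_of_pos hu0]; linarith
        have hbn : ‖u • ej‖ ≤ 2 * S := by
          rw [norm_smul, hnej, Real.norm_eq_abs, abs_of_pos hu0]; linarith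
        have hib := inner_bound f hfc N hNf S hS (S • ei + u • ej) (u • ej) ha hbn
        have hres : ∀ x : E3, x + (S • ei + u • ej) = x + S • ei + u • ej :=
          fun x => (add_assoc _ _ _).symm
        simp only [hres] at hib
        rw [Real.norm_eq_abs]
        exact hib
      have := intervalIntegral.norm_integral_le_of_norm_le_const hb
      rw [Real.norm_eq_abs] at this
      calc |∫ u in (0:ℝ)..S, ∫ x in D, (f (x + S • ei + u • ej) - f (x + u • ej))|
          ≤ 54 * N * V * |S - 0| := this
        _ = 54 * N * V * S := by rw [sub_zero, abs_of_pos hS]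
    have hTB : |∫ s in (0:ℝ)..S, ∫ x in D, (g (x + s • ei + S • ej) - g (x + s • ei))|
        ≤ 54 * N * V * S := by
      have hb : ∀ s ∈ Set.uIoc (0:ℝ) S,
          ‖∫ x in D, (g (x + s • ei + S • ej) - g (x + s • ei))‖ ≤ 54 * N * V := by
        intro s hs
        rw [Set.uIoc_of_le hS.le] at hs
        have hs0 : 0 < s := hs.1
        have hsS : s ≤ S := hs.2
        have ha : ‖s • ei + S • ej‖ ≤ 2 * S := by
          calc ‖s • ei + S • ej‖ ≤ ‖s • ei‖ + ‖S • ej‖ := norm_add_le _ _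
            _ = |s| + |S| := by rw [norm_smul, norm_smul, hnei, hnej,
                Real.norm_eq_abs, Real.norm_eq_abs]; ring
            _ ≤ 2 * S := by rw [abs_of_pos hS, abs_of_pos hs0]; linarith
        have hbn : ‖s • ei‖ ≤ 2 * S := by
          rw [norm_smul, hnei, Real.norm_eq_abs, abs_of_pos hs0]; linarith
        have hib := inner_bound g hgc N hNg S hS (s • ei + S • ej) (s • ei) ha hbn
        have hres : ∀ x : E3, x + (s • ei + S • ej) = x + s • ei + S • ej :=
          fun x => (add_assoc _ _ _).symm
        simp only [hres] at hib
        rw [Real.norm_eq_abs]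
        exact hib
      have := intervalIntegral.norm_integral_le_of_norm_le_const hb
      rw [Real.norm_eq_abs] at this
      calc |∫ s in (0:ℝ)..S, ∫ x in D, (g (x + s • ei + S • ej) - g (x + s • ei))|
          ≤ 54 * N * V * |S - 0| := this
        _ = 54 * N * V * S := by rw [sub_zero, abs_of_pos hS]
    have hfinal : c * S * S * V
        = (∫ u in (0:ℝ)..S, ∫ x in D, (f (x + S • ei + u • ej) - f (x + u • ej)))
          - ∫ s in (0:ℝ)..S, ∫ x in D, (g (x + s • ei + S • ej) - g (x + s • ei)) := by
      rw [← eq2, ← eq3, eq1]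
      ring
    have hVpos : 0 < V := vol_pos 0 S hS
    have habs : |c| * S * S * V = |c * S * S * V| := by
      rw [abs_mul, abs_mul, abs_mul, abs_of_pos hS, abs_of_pos hVpos]
    rw [habs, hfinal]
    calc |(∫ u in (0:ℝ)..S, ∫ x in D, (f (x + S • ei + u • ej) - f (x + u • ej)))
          - ∫ s in (0:ℝ)..S, ∫ x in D, (g (x + s • ei + S • ej) - g (x + s • ei))|
        ≤ |∫ u in (0:ℝ)..S, ∫ x in D, (f (x + S • ei + u • ej) - f (x + u • ej))|
          + |∫ s in (0:ℝ)..S, ∫ x in D, (g (x + s • ei + S • ej) - g (x + s • ei))| :=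
          abs_sub _ _
      _ ≤ 54 * N * V * S + 54 * N * V * S := by linarith
      _ = 108 * N * S * V := by ring
  -- conclusion
  have hN0 : 0 ≤ N := by
    have h1 := hNf 0 1 one_pos
    have h2 : 0 ≤ ∫ x in ball (0:E3) 1, |f x - ⨍ y in ball (0:E3) 1, f y| :=
      integral_nonneg fun x => abs_nonneg _
    have h3 := vol_pos 0 1 one_pos
    nlinarith
  by_contra hc0
  have hcpos : 0 < |c| := abs_pos.mpr hc0
  set S := (108 * N + 1) / |c| with hSdef
  have hSpos : 0 < S := by positivity
  have hb := main S hSpos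
  have hVpos := vol_pos 0 S hSpos
  have h1 : |c| * S = 108 * N + 1 := by
    rw [hSdef]
    field_simp
  have h2 : |c| * S ≤ 108 * N := by
    nlinarith [mul_pos hSpos hVpos]
  linarith

/-- A space-independent ancient velocity field `u(x,t) = l(t)` which is the curl of a
divergence-free stream field `B(·,t)` with harmonic components and uniformly bounded
BMO seminorm must vanish identically. -/
theorem stmt_19 (l : ℝ → EuclideanSpace ℝ (Fin 3))
    (B : ℝ → EuclideanSpace ℝ (Fin 3) → EuclideanSpace ℝ (Fin 3))
    (hB_smooth : ∀ t ≤ (0 : ℝ), ContDiff ℝ 2 (B t))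
    (hB_div : ∀ t ≤ (0 : ℝ), ∀ x, div3 (B t) x = 0)
    (hcurl : ∀ t ≤ (0 : ℝ), ∀ x, curl (B t) x = l t)
    (hharm : ∀ t ≤ (0 : ℝ), ∀ i : Fin 3, ∀ x, laplacian (fun y => B t y i) x = 0)
    (hB_loc : ∀ t ≤ (0 : ℝ), ∀ i : Fin 3,
      LocallyIntegrable (fun x => B t x i) volume)
    (hBMO : ∃ N : ℝ, ∀ t ≤ (0 : ℝ), ∀ i : Fin 3,
      ∀ (x0 : EuclideanSpace ℝ (Fin 3)) (R : ℝ), 0 < R →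
        ∫ x in ball x0 R, |B t x i - ⨍ y in ball x0 R, B t y i| ≤
          N * (volume (ball x0 R)).toReal) :
    ∀ t ≤ (0 : ℝ), l t = 0 := by
  obtain ⟨N, hN⟩ := hBMO
  intro t ht
  have hsm := hB_smooth t ht
  have comp : ∀ k : Fin 3, ContDiff ℝ 2 fun y : EuclideanSpace ℝ (Fin 3) => B t y k := by
    intro k
    exact (EuclideanSpace.proj k).contDiff.comp hsm
  have hcx := hcurl t ht
  have h0 : ∀ x, pd 1 (fun y => B t y 2) x - pd 2 (fun y => B t y 1) x = l t 0 := by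
    intro x
    calc pd 1 (fun y => B t y 2) x - pd 2 (fun y => B t y 1) x
        = curl (B t) x 0 := by simp [curl]
      _ = l t 0 := by rw [hcx x]
  have h1 : ∀ x, pd 2 (fun y => B t y 0) x - pd 0 (fun y => B t y 2) x = l t 1 := by
    intro x
    calc pd 2 (fun y => B t y 0) x - pd 0 (fun y => B t y 2) x
        = curl (B t) x 1 := by simp [curl]
      _ = l t 1 := by rw [hcx x]
  have h2 : ∀ x, pd 0 (fun y => B t y 1) x - pd 1 (fun y => B t y 0) x = l t 2 := by
    intro x
    calc pd 0 (fun y => B t y 1) x - pd 1 (fun y => B t y 0) x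
        = curl (B t) x 2 := by simp [curl]
      _ = l t 2 := by rw [hcx x]
  have z0 := key _ _ 1 2 (l t 0) N (comp 2) (comp 1) h0 (hN t ht 2) (hN t ht 1)
  have z1 := key _ _ 2 0 (l t 1) N (comp 0) (comp 2) h1 (hN t ht 0) (hN t ht 2)
  have z2 := key _ _ 0 1 (l t 2) N (comp 1) (comp 0) h2 (hN t ht 1) (hN t ht 0)
  have : ∀ k : Fin 3, l t k = 0 := by
    intro k
    fin_cases k <;> assumption
  exact PiLp.ext this
end
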